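/- The function k_σ(x,y,t;x′,y′,t′) = (1/(1/σ² + 2(t+t′))) · exp(−((x−x′)² + (y−y′)²)/(2(1/σ² + 2(t+t′)))) satisfies the two-dimensional heat equation ∂ₓ²k + ∂_y²k = ∂ₜk in the variables (x,y,t), for every σ > 0 and all arguments with 1/σ² + 2(t+t′) > 0. -/

import Mathlib

/-- The EPGP covariance kernel for the 2D heat equation with scale parameter σ². -/
noncomputable def heatKernel2D (σ x y t x' y' t' : ℝ) : ℝ :=
  (1 / (1 / σ ^ 2 + 2 * (t + t'))) *
    Real.exp (-((x - x') ^ 2 + (y - y') ^ 2) / (2 * (1 / σ ^ 2 + 2 * (t + t'))))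

/-- Derivative of the Gaussian in its first spatial slot. -/
lemma gauss_hasDerivAt_left (K C c p : ℝ) (hc : c ≠ 0) (a : ℝ) :
    HasDerivAt (fun a : ℝ => K * Real.exp (-((a - p) ^ 2 + C) / (2 * c)))
      (K * Real.exp (-((a - p) ^ 2 + C) / (2 * c)) * (-(a - p) / c)) a := by
  have h1 : HasDerivAt (fun a : ℝ => -((a - p) ^ 2 + C) / (2 * c)) (-(a - p) / c) a := by
    have h0 : HasDerivAt (fun a : ℝ => (a - p) ^ 2 + C) (2 * (a - p)) a := by
      simpa using (((hasDerivAt_id a).sub_const p).pow 2).add_const C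
    have h2 := (h0.neg).div_const (2 * c)
    refine h2.congr_deriv ?_
    field_simp
  have := (h1.exp).const_mul K
  refine this.congr_deriv ?_
  ring

/-- Derivative of the Gaussian in its second spatial slot. -/
lemma gauss_hasDerivAt_right (K C c p : ℝ) (hc : c ≠ 0) (a : ℝ) :
    HasDerivAt (fun a : ℝ => K * Real.exp (-(C + (a - p) ^ 2) / (2 * c)))
      (K * Real.exp (-(C + (a - p) ^ 2) / (2 * c)) * (-(a - p) / c)) a := by
  have := gauss_hasDerivAt_left K C c p hc a
  simp only [add_comm] at this ⊢
  exact this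

lemma second_deriv_left (K C c p : ℝ) (hc : c ≠ 0) (x : ℝ) :
    deriv (deriv (fun a : ℝ => K * Real.exp (-((a - p) ^ 2 + C) / (2 * c)))) x
      = K * Real.exp (-((x - p) ^ 2 + C) / (2 * c)) * ((x - p) ^ 2 / c ^ 2 - 1 / c) := by
  have hd : deriv (fun a : ℝ => K * Real.exp (-((a - p) ^ 2 + C) / (2 * c)))
      = fun a : ℝ => K * Real.exp (-((a - p) ^ 2 + C) / (2 * c)) * (-(a - p) / c) := by
    funext a; exact (gauss_hasDerivAt_left K C c p hc a).deriv
  rw [hd]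
  have h1 : HasDerivAt (fun a : ℝ => -(a - p) / c) (-1 / c) x := by
    simpa using (((hasDerivAt_id x).sub_const p).neg).div_const c
  have h2 := (gauss_hasDerivAt_left K C c p hc x).mul h1
  erw [h2.deriv]
  field_simp; ring

lemma second_deriv_right (K C c p : ℝ) (hc : c ≠ 0) (x : ℝ) :
    deriv (deriv (fun a : ℝ => K * Real.exp (-(C + (a - p) ^ 2) / (2 * c)))) x
      = K * Real.exp (-(C + (x - p) ^ 2) / (2 * c)) * ((x - p) ^ 2 / c ^ 2 - 1 / c) := by
  have := second_deriv_left K C c p hc x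
  simp only [add_comm] at this ⊢
  exact this

lemma time_deriv (R A t' : ℝ) (t : ℝ) (hc : A + 2 * (t + t') ≠ 0) :
    HasDerivAt (fun s : ℝ => (1 / (A + 2 * (s + t'))) *
        Real.exp (-R / (2 * (A + 2 * (s + t')))))
      ((1 / (A + 2 * (t + t'))) * Real.exp (-R / (2 * (A + 2 * (t + t')))) *
        (R / (A + 2 * (t + t')) ^ 2 - 2 / (A + 2 * (t + t')))) t := by
  set c := A + 2 * (t + t') with hcdef
  have hcder : HasDerivAt (fun s : ℝ => A + 2 * (s + t')) 2 t := by
    simpa using (((hasDerivAt_id t).add_const t').const_mul 2).const_add A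
  have hinv : HasDerivAt (fun s : ℝ => 1 / (A + 2 * (s + t'))) (-2 / c ^ 2) t := by
    have := (hasDerivAt_const t (1 : ℝ)).div hcder hc
    refine this.congr_deriv ?_
    rw [← hcdef]
    field_simp
    ring
  have harg : HasDerivAt (fun s : ℝ => -R / (2 * (A + 2 * (s + t')))) (R / c ^ 2) t := by
    have hden : HasDerivAt (fun s : ℝ => 2 * (A + 2 * (s + t'))) 4 t := by
      have := hcder.const_mul 2
      norm_num at this
      exact this
    have h2c : 2 * (A + 2 * (t + t')) ≠ 0 := by
      simp [hcdef] at hc ⊢; exact hc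
    have := (hasDerivAt_const t (-R)).div hden h2c
    refine this.congr_deriv ?_
    rw [← hcdef]
    field_simp; ring
  have := hinv.mul harg.exp
  refine this.congr_deriv ?_
  rw [← hcdef]
  field_simp; ring

/-- The 2D EPGP heat kernel satisfies ∂ₓ²k + ∂_y²k = ∂ₜk in (x,y,t),
    whenever σ > 0 and 1/σ² + 2(t+t') > 0. -/
theorem heatKernel2D_satisfies_heat_equation (σ x y t x' y' t' : ℝ)
    (hσ : σ > 0) (h : 1 / σ ^ 2 + 2 * (t + t') > 0) :
    deriv (deriv (fun a : ℝ => heatKernel2D σ a y t x' y' t')) x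
      + deriv (deriv (fun b : ℝ => heatKernel2D σ x b t x' y' t')) y
      = deriv (fun s : ℝ => heatKernel2D σ x y s x' y' t') t := by
  have hc : 1 / σ ^ 2 + 2 * (t + t') ≠ 0 := ne_of_gt h
  set c := 1 / σ ^ 2 + 2 * (t + t') with hcdef
  have hX := second_deriv_left (1 / c) ((y - y') ^ 2) c x' hc x
  have hY := second_deriv_right (1 / c) ((x - x') ^ 2) c y' hc y
  have hT := (time_deriv ((x - x') ^ 2 + (y - y') ^ 2) (1 / σ ^ 2) t' t hc).deriv
  simp only [heatKernel2D, ← hcdef] at hX hY hT ⊢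
  rw [hX, hY, hT]
  field_simp
  ring
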